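/- The function f(x) = x·(1-x)^(1-1/x) is concave on the open interval (0,1). -/

import Mathlib

open Real Set

noncomputable def Gaux (x : ℝ) : ℝ := Real.log x + (1 - 1/x) * Real.log (1 - x)
noncomputable def g1 (x : ℝ) : ℝ := 2/x + Real.log (1 - x) / x^2
noncomputable def g2 (x : ℝ) : ℝ :=
  -(2/x^2) - 1/((1-x)*x^2) - 2 * Real.log (1 - x) / x^3

lemma hasDerivAt_Gaux {x : ℝ} (hx : x ∈ Ioo (0:ℝ) 1) : HasDerivAt Gaux (g1 x) x := by
  obtain ⟨h0, h1⟩ := hx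
  have hx0 : x ≠ 0 := ne_of_gt h0
  have h1x : (0:ℝ) < 1 - x := by linarith
  have h1x0 : (1:ℝ) - x ≠ 0 := ne_of_gt h1x
  have d1 : HasDerivAt (fun y : ℝ => Real.log y) x⁻¹ x := Real.hasDerivAt_log hx0
  have d2 : HasDerivAt (fun y : ℝ => 1 - 1/y) ((x^2)⁻¹) x := by
    simpa using ((hasDerivAt_inv hx0).const_sub 1)
  have d3 : HasDerivAt (fun y : ℝ => Real.log (1 - y)) ((-1)/(1-x)) x := by
    have : HasDerivAt (fun y : ℝ => 1 - y) (-1) x := by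
      simpa using (hasDerivAt_id x).const_sub 1
    exact this.log h1x0
  have d4 := d1.add (d2.mul d3)
  have heq : x⁻¹ + ((x ^ 2)⁻¹ * Real.log (1 - x) + (1 - 1 / x) * (-1 / (1 - x))) = g1 x := by
    unfold g1
    field_simp
    ring
  rw [heq] at d4
  exact d4

lemma hasDerivAt_g1 {x : ℝ} (hx : x ∈ Ioo (0:ℝ) 1) : HasDerivAt g1 (g2 x) x := by
  obtain ⟨h0, h1⟩ := hx
  have hx0 : x ≠ 0 := ne_of_gt h0
  have h1x : (0:ℝ) < 1 - x := by linarith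
  have h1x0 : (1:ℝ) - x ≠ 0 := ne_of_gt h1x
  have d1 : HasDerivAt (fun y : ℝ => 2/y) (-(2/x^2)) x := by
    have := (hasDerivAt_inv hx0).const_mul (2:ℝ)
    simpa [div_eq_mul_inv] using this
  have d2n : HasDerivAt (fun y : ℝ => Real.log (1 - y)) ((-1)/(1-x)) x := by
    have : HasDerivAt (fun y : ℝ => 1 - y) (-1) x := by
      simpa using (hasDerivAt_id x).const_sub 1
    exact this.log h1x0
  have d2d : HasDerivAt (fun y : ℝ => y^2) (2*x) x := by
    simpa [mul_comm] using (hasDerivAt_pow 2 x)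
  have hx2 : x^2 ≠ 0 := pow_ne_zero 2 hx0
  have d2 := d2n.div d2d hx2
  have d := d1.add d2
  have heq : -(2/x^2) + ((-1)/(1-x) * x^2 - Real.log (1-x) * (2*x)) / (x^2)^2 = g2 x := by
    unfold g2
    field_simp
    ring
  rw [heq] at d
  exact d

lemma key_ineq {x : ℝ} (hx : x ∈ Ioo (0:ℝ) 1) :
    (x + Real.log (1 - x))^2 * (1 - x) ≤ x^3 := by
  obtain ⟨h0, h1⟩ := hx
  have h1x : (0:ℝ) < 1 - x := by linarith
  set s := Real.sqrt (1 - x) with hs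
  have hs0 : 0 < s := Real.sqrt_pos.mpr h1x
  have hs2 : s^2 = 1 - x := Real.sq_sqrt (le_of_lt h1x)
  have hs1 : s < 1 := by nlinarith [hs2]
  have hL : Real.log (1 - x) = 2 * Real.log s := by
    rw [← hs2, Real.log_pow]; push_cast; ring
  -- from sinh: -log s ≤ (1/s - s)/2
  have hsinh : -Real.log s ≤ Real.sinh (-Real.log s) :=
    Real.self_le_sinh_iff.mpr (neg_nonneg.mpr (Real.log_nonpos hs0.le hs1.le))
  have hexp : Real.exp (-Real.log s) = s⁻¹ := by
    rw [Real.exp_neg, Real.exp_log hs0]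
  have hexp2 : Real.exp (-(-Real.log s)) = s := by
    rw [neg_neg, Real.exp_log hs0]
  rw [Real.sinh_eq, hexp, hexp2] at hsinh
  -- hsinh : -log s ≤ (s⁻¹ - s)/2
  have h2 : 2 * s * (-Real.log s) ≤ 1 - s^2 := by
    have := mul_le_mul_of_nonneg_left hsinh (le_of_lt (by positivity : (0:ℝ) < 2*s))
    have hinv : 2 * s * ((s⁻¹ - s)/2) = 1 - s^2 := by
      field_simp
    linarith [this, hinv.le, hinv.ge]
  -- log(1-x) ≤ -x
  have hlog2 : Real.log (1 - x) ≤ -x := by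
    have := Real.log_le_sub_one_of_pos h1x
    linarith
  -- a = -(x + L) ≥ 0
  set L := Real.log (1 - x) with hLdef
  have ha : 0 ≤ -(x + L) := by linarith
  have hsa : s * (-(x + L)) ≤ x * (1 - s) := by
    have : s * (-L) ≤ x := by
      rw [hL]; nlinarith [h2]
    nlinarith [hs0.le, hs1.le]
  have hx1s : (1 - s)^2 ≤ x := by nlinarith [hs2]
  have hsq : (s * (-(x+L)))^2 ≤ (x * (1-s))^2 := by
    have h0' : 0 ≤ s * (-(x+L)) := mul_nonneg hs0.le ha
    nlinarith [hsa]
  calc (x + L)^2 * (1-x) = (s * (-(x+L)))^2 := by rw [← hs2]; ring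
    _ ≤ (x * (1-s))^2 := hsq
    _ = x^2 * (1-s)^2 := by ring
    _ ≤ x^2 * x := by nlinarith [hx1s, sq_nonneg x]
    _ = x^3 := by ring

lemma second_nonpos {x : ℝ} (hx : x ∈ Ioo (0:ℝ) 1) : g1 x ^ 2 + g2 x ≤ 0 := by
  obtain ⟨h0, h1⟩ := hx
  have h1x : (0:ℝ) < 1 - x := by linarith
  have hkey := key_ineq ⟨h0, h1⟩
  have hx0 : x ≠ 0 := ne_of_gt h0
  have h1x0 : (1:ℝ) - x ≠ 0 := ne_of_gt h1x
  unfold g1 g2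
  have expand : (2/x + Real.log (1-x)/x^2)^2 + (-(2/x^2) - 1/((1-x)*x^2) - 2*Real.log (1-x)/x^3)
      = ((x + Real.log (1-x))^2 * (1-x) - x^3) / ((1-x) * x^4) := by
    field_simp
    ring
  rw [expand]
  apply div_nonpos_of_nonpos_of_nonneg
  · linarith
  · positivity

theorem stmt_1 :
    ConcaveOn ℝ (Set.Ioo (0 : ℝ) 1) (fun x : ℝ => x * (1 - x) ^ (1 - 1 / x)) := by
  have hint : interior (Ioo (0:ℝ) 1) = Ioo (0:ℝ) 1 := isOpen_Ioo.interior_eq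
  set F : ℝ → ℝ := fun x => Real.exp (Gaux x) with hF
  have hfeq : ∀ x ∈ Ioo (0:ℝ) 1, x * (1 - x) ^ (1 - 1 / x) = F x := by
    intro x hx
    obtain ⟨h0, h1⟩ := hx
    have h1x : (0:ℝ) < 1 - x := by linarith
    rw [hF]
    simp only [Gaux]
    rw [Real.exp_add, Real.exp_log h0, Real.rpow_def_of_pos h1x]
    ring_nf
  have hFd : ∀ x ∈ Ioo (0:ℝ) 1, HasDerivAt F (F x * g1 x) x := by
    intro x hx
    exact (hasDerivAt_Gaux hx).exp
  have hfd : ∀ x ∈ Ioo (0:ℝ) 1,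
      HasDerivAt (fun x : ℝ => x * (1 - x) ^ (1 - 1 / x)) (F x * g1 x) x := by
    intro x hx
    apply (hFd x hx).congr_of_eventuallyEq
    filter_upwards [isOpen_Ioo.mem_nhds hx] with y hy
    exact hfeq y hy
  have hF1d : ∀ x ∈ Ioo (0:ℝ) 1,
      HasDerivAt (fun x => F x * g1 x) (F x * (g1 x ^ 2 + g2 x)) x := by
    intro x hx
    have : HasDerivAt (fun y => F y * g1 y) _ x := (hFd x hx).mul (hasDerivAt_g1 hx)
    convert this using 1
    ring
  apply concaveOn_of_hasDerivWithinAt2_nonpos (f' := fun x => F x * g1 x)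
    (f'' := fun x => F x * (g1 x ^ 2 + g2 x)) (convex_Ioo 0 1)
  · intro x hx
    exact (hfd x hx).continuousAt.continuousWithinAt
  · intro x hx
    rw [hint] at hx
    exact (hfd x hx).hasDerivWithinAt
  · intro x hx
    rw [hint] at hx
    exact (hF1d x hx).hasDerivWithinAt
  · intro x hx
    rw [hint] at hx
    have := second_nonpos hx
    have hFpos : 0 < F x := Real.exp_pos _
    nlinarith
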